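/- Hellinger–Euclidean comparison for logistic regression: let Φ(z) = 1/(1+e^{−z}) and for θ ∈ ℝ^d, w ∈ ℝ^d define the Bernoulli likelihood f_θ(x|w) = Φ(θᵀw)^x Φ(−θᵀw)^{1−x} for x ∈ {0,1}. Then the squared Hellinger distance over x ∈ {0,1} satisfies h²(θ*, θ) := ½ ∑_{x=0}^{1} (√f_{θ*}(x|w) − √f_θ(x|w))² = (1/8)·Φ(φᵀw)Φ(−φᵀw)·((θ−θ*)ᵀw)² for some φ on the segment between θ* and θ. Consequently, if ‖θ − θ*‖₂ ≤ R and w is fixed with wᵀw > 0 and ‖w‖_∞ ≤ 1, there is a constant C > 0 (depending on R, θ*, w) with h(θ*, θ) ≥ C·|(θ−θ*)ᵀw|. -/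

import Mathlib

/-- The standard logistic function `Φ(z) = 1/(1 + e^{−z})`. -/
noncomputable def logisticFn (z : ℝ) : ℝ := 1 / (1 + Real.exp (-z))

/-- Dot product `θᵀw` on `ℝ^d`. -/
def dotProd {d : ℕ} (a b : Fin d → ℝ) : ℝ := ∑ i, a i * b i

/-- The Bernoulli (logistic regression) likelihood
`f_θ(x|w) = Φ(θᵀw)^x Φ(−θᵀw)^{1−x}` for `x ∈ {0,1}`. -/
noncomputable def logisticLik (t : ℝ) (x : ℕ) : ℝ :=
  logisticFn t ^ x * logisticFn (-t) ^ (1 - x)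

/-- Squared Hellinger distance over `x ∈ {0,1}` between the logistic likelihoods
at `θ*` and `θ`. -/
noncomputable def logisticSqHellinger {d : ℕ} (θs θ w : Fin d → ℝ) : ℝ :=
  (1 / 2) * ∑ x ∈ Finset.range 2,
    (Real.sqrt (logisticLik (dotProd θs w) x) - Real.sqrt (logisticLik (dotProd θ w) x)) ^ 2

namespace LHEC

open Real

noncomputable def ang (c : ℝ) : ℝ := arctan (exp (-(c/2)))

noncomputable def rr (c : ℝ) : ℝ := cos (ang c) * sin (ang c)

lemma one_add_exp_pos (z : ℝ) : 0 < 1 + exp z := by positivity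

lemma logistic_pos (z : ℝ) : 0 < logisticFn z := by
  unfold logisticFn; positivity

lemma logistic_mono {z₁ z₂ : ℝ} (h : z₁ ≤ z₂) : logisticFn z₁ ≤ logisticFn z₂ := by
  unfold logisticFn
  apply one_div_le_one_div_of_le (one_add_exp_pos _)
  have := Real.exp_le_exp.2 (neg_le_neg h)
  linarith

lemma exp_sq (c : ℝ) : exp (-(c/2)) ^ 2 = exp (-c) := by
  rw [sq, ← Real.exp_add]; ring_nf

lemma cos_ang_sq (c : ℝ) : cos (ang c) ^ 2 = logisticFn c := by
  rw [ang, Real.cos_sq_arctan, exp_sq, logisticFn]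

lemma cos_ang_pos (c : ℝ) : 0 < cos (ang c) := Real.cos_arctan_pos _

lemma ang_pos (c : ℝ) : 0 < ang c := by
  have := Real.arctan_strictMono (show (0:ℝ) < exp (-(c/2)) from exp_pos _)
  rw [Real.arctan_zero] at this; exact this

lemma ang_lt (c : ℝ) : ang c < π/2 := Real.arctan_lt_pi_div_two _

lemma sin_ang_pos (c : ℝ) : 0 < sin (ang c) := by
  apply Real.sin_pos_of_pos_of_lt_pi (ang_pos c)
  have := ang_lt c
  have := Real.pi_pos
  linarith

lemma ang_neg (c : ℝ) : ang (-c) = π/2 - ang c := by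
  have h : exp (-(-c/2)) = (exp (-(c/2)))⁻¹ := by
    rw [← Real.exp_neg]; ring_nf
  rw [ang, h, Real.arctan_inv_of_pos (exp_pos _)]; rfl

lemma sin_ang_sq (c : ℝ) : sin (ang c) ^ 2 = logisticFn (-c) := by
  have : sin (ang c) = cos (ang (-c)) := by
    rw [ang_neg, Real.cos_pi_div_two_sub]
  rw [this, cos_ang_sq]

lemma sqrt_logistic (c : ℝ) : Real.sqrt (logisticFn c) = cos (ang c) := by
  rw [← cos_ang_sq, Real.sqrt_sq (cos_ang_pos c).le]

lemma sqrt_logistic' (c : ℝ) : Real.sqrt (logisticFn (-c)) = sin (ang c) := by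
  rw [← sin_ang_sq, Real.sqrt_sq (sin_ang_pos c).le]

lemma ang_antitone {s t : ℝ} (h : s ≤ t) : ang t ≤ ang s := by
  apply Real.arctan_strictMono.monotone
  apply Real.exp_le_exp.2; linarith

lemma ang_le_pi_div_four {c : ℝ} (h : 0 ≤ c) : ang c ≤ π/4 := by
  rw [← Real.arctan_one]
  apply Real.arctan_strictMono.monotone
  rw [Real.exp_le_one_iff]; linarith

lemma rr_pos (c : ℝ) : 0 < rr c := mul_pos (cos_ang_pos c) (sin_ang_pos c)

lemma rr_sq (c : ℝ) : rr c ^ 2 = logisticFn c * logisticFn (-c) := by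
  rw [rr, mul_pow, cos_ang_sq, sin_ang_sq]

lemma rr_eq (c : ℝ) : rr c = exp (-(c/2)) / (1 + exp (-c)) := by
  rw [rr, ang, Real.cos_arctan, Real.sin_arctan, exp_sq]
  rw [div_mul_div_comm, one_mul, Real.mul_self_sqrt (by positivity)]

lemma rr_even (c : ℝ) : rr (-c) = rr c := by
  have h : rr (-c) ^ 2 = rr c ^ 2 := by
    rw [rr_sq, rr_sq, neg_neg, mul_comm]
  nlinarith [rr_pos (-c), rr_pos c, h]

lemma rr_two (c : ℝ) : 2 * rr c = sin (2 * ang c) := by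
  rw [Real.sin_two_mul, rr]; ring

lemma hasDerivAt_ang (c : ℝ) : HasDerivAt ang (-(rr c)/2) c := by
  have h1 : HasDerivAt (fun x : ℝ => -(x/2)) (-(1/2)) c := by
    simpa using (hasDerivAt_id c).div_const 2 |>.fun_neg
  have h2 : HasDerivAt (fun x : ℝ => exp (-(x/2))) (exp (-(c/2)) * (-(1/2))) c :=
    (Real.hasDerivAt_exp _).comp c h1
  have h3 := (Real.hasDerivAt_arctan (exp (-(c/2)))).comp c h2
  refine h3.congr_deriv ?_
  rw [rr_eq, exp_sq]
  field_simp


lemma le_of_deriv_nonpos {f f' : ℝ → ℝ} (hf : ∀ x, HasDerivAt f (f' x) x) {a b : ℝ}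
    (hab : a ≤ b) (h : ∀ x, a < x → x < b → f' x ≤ 0) : f b ≤ f a := by
  rcases eq_or_lt_of_le hab with rfl | hab'
  · exact le_rfl
  · obtain ⟨c, hc, hceq⟩ := exists_hasDerivAt_eq_slope f f' hab'
      (fun x _ => (hf x).continuousAt.continuousWithinAt)
      (fun x hx => hf x)
    have h0 : f' c ≤ 0 := h c hc.1 hc.2
    rw [hceq] at h0
    have := div_nonpos_iff.1 h0
    rcases this with ⟨h1, h2⟩ | ⟨h1, h2⟩
    · linarith
    · linarith

lemma ge_of_deriv_nonneg {f f' : ℝ → ℝ} (hf : ∀ x, HasDerivAt f (f' x) x) {a b : ℝ}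
    (hab : a ≤ b) (h : ∀ x, a < x → x < b → 0 ≤ f' x) : f a ≤ f b := by
  have := le_of_deriv_nonpos (f := fun x => -f x) (f' := fun x => -f' x)
    (fun x => (hf x).neg) hab (fun x h1 h2 => neg_nonpos.2 (h x h1 h2))
  simpa using this

lemma sin_sq_le_sq (x : ℝ) : sin x ^ 2 ≤ x ^ 2 := by
  wlog hx : 0 ≤ x with H
  · have := H (-x) (by linarith)
    simpa using this
  rcases le_or_gt 1 x with h1 | h1
  · have := Real.sin_sq_le_one x
    nlinarith
  · have hs : 0 ≤ sin x := Real.sin_nonneg_of_nonneg_of_le_pi hx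
      (by nlinarith [Real.pi_gt_three])
    have : sin x ≤ x := by
      rcases eq_or_lt_of_le hx with rfl | hx'
      · simp
      · exact (Real.sin_lt hx').le
    nlinarith

noncomputable def phi (t σ : ℝ) : ℝ := 4 * sin ((ang σ - ang t)/2) - rr t * (t - σ)

lemma hasDerivAt_phi (t σ : ℝ) :
    HasDerivAt (phi t) (rr t - rr σ * cos ((ang σ - ang t)/2)) σ := by
  have h1 : HasDerivAt (fun x => (ang x - ang t)/2) (-(rr σ)/2/2) σ :=
    ((hasDerivAt_ang σ).sub_const (ang t)).div_const 2
  have h2 : HasDerivAt (fun x => sin ((ang x - ang t)/2))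
      (cos ((ang σ - ang t)/2) * (-(rr σ)/2/2)) σ :=
    (Real.hasDerivAt_sin _).comp σ h1
  have h3 : HasDerivAt (fun x => rr t * (t - x)) (rr t * (-1)) σ :=
    ((hasDerivAt_id σ).const_sub t).const_mul (rr t)
  have := (h2.const_mul 4).sub h3
  refine this.congr_deriv ?_
  ring

lemma key1 {t σ : ℝ} (h0 : 0 ≤ σ) (hσt : σ ≤ t) :
    rr t ≤ rr σ * cos ((ang σ - ang t)/2) := by
  set a := ang σ with ha
  set b := ang t with hb
  have hba : b ≤ a := ang_antitone hσt
  have ha4 : a ≤ π/4 := ang_le_pi_div_four h0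
  have hb0 : 0 < b := ang_pos t
  have hpi : 0 < π := Real.pi_pos
  have h2b : (2:ℝ)*b = 2*a - 2*(a-b) := by ring
  have hsplit : sin (2*b) = sin (2*a) * cos (2*(a-b)) - cos (2*a) * sin (2*(a-b)) := by
    rw [h2b, Real.sin_sub]
  have hcos2a : 0 ≤ cos (2*a) := by
    apply Real.cos_nonneg_of_mem_Icc
    constructor <;> [linarith [ang_pos σ]; linarith]
  have hsin2ab : 0 ≤ sin (2*(a-b)) := by
    apply Real.sin_nonneg_of_nonneg_of_le_pi <;> [linarith; linarith]
  have hsin2a : 0 ≤ sin (2*a) := by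
    apply Real.sin_nonneg_of_nonneg_of_le_pi <;> [linarith [ang_pos σ]; linarith]
  have hcoscos : cos (2*(a-b)) ≤ cos ((a-b)/2) := by
    apply Real.cos_le_cos_of_nonneg_of_le_pi <;> [linarith; linarith; linarith]
  have h5 : sin (2*b) ≤ sin (2*a) * cos ((a-b)/2) := by
    nlinarith
  have e1 : 2 * rr t = sin (2*b) := by rw [rr_two]
  have e2 : 2 * rr σ = sin (2*a) := by rw [rr_two]
  rw [← e2] at h5
  linarith

lemma D_mono {t σ₁ σ₂ : ℝ} (ht : 0 ≤ t) (h1 : -t ≤ σ₁) (h12 : σ₁ ≤ σ₂) (h2 : σ₂ ≤ 0) :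
    rr σ₁ * cos ((ang σ₁ - ang t)/2) ≤ rr σ₂ * cos ((ang σ₂ - ang t)/2) := by
  have hpi : 0 < π := Real.pi_pos
  have hang12 : ang σ₂ ≤ ang σ₁ := ang_antitone h12
  have hangt2 : ang t ≤ ang σ₂ := ang_antitone (le_trans h2 ht)
  have hang1lt : ang σ₁ < π/2 := ang_lt σ₁
  have hangt0 : 0 < ang t := ang_pos t
  have hrr : rr σ₁ ≤ rr σ₂ := by
    rw [rr_eq, rr_eq]
    set x := exp (-(σ₂/2)) with hx
    set y := exp (-(σ₁/2)) with hy
    have hx1 : 1 ≤ x := by rw [hx]; apply Real.one_le_exp; linarith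
    have hxy : x ≤ y := by rw [hx, hy]; apply Real.exp_le_exp.2; linarith
    rw [show exp (-σ₁) = y^2 from (exp_sq σ₁).symm, show exp (-σ₂) = x^2 from (exp_sq σ₂).symm]
    rw [div_le_div_iff₀ (by positivity) (by positivity)]
    have key : 0 ≤ (y - x) * (x*y - 1) := mul_nonneg (by linarith) (by nlinarith)
    nlinarith [key]
  have hcos : cos ((ang σ₁ - ang t)/2) ≤ cos ((ang σ₂ - ang t)/2) := by
    apply Real.cos_le_cos_of_nonneg_of_le_pi <;> [linarith; linarith; linarith]
  have hc1 : 0 ≤ cos ((ang σ₁ - ang t)/2) := by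
    apply Real.cos_nonneg_of_mem_Icc
    constructor <;> [linarith; linarith]
  exact mul_le_mul hrr hcos hc1 (rr_pos σ₂).le

lemma phi_self (t : ℝ) : phi t t = 0 := by simp [phi]

lemma step1 {t : ℝ} {σ : ℝ} (h0 : 0 ≤ σ) (h2 : σ ≤ t) : 0 ≤ phi t σ := by
  have := le_of_deriv_nonpos (hasDerivAt_phi t) h2
    (fun x hx1 hx2 => by
      have := key1 (le_trans h0 hx1.le) hx2.le
      linarith)
  rw [phi_self] at this
  linarith

lemma stepE {t : ℝ} (ht : 0 ≤ t) : 0 ≤ phi t (-t) := by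
  have hb := ang_pos t
  set b := ang t with hbdef
  set sb := sin b with hsb
  set cb := cos b with hcb
  have hcb0 : 0 < cb := cos_ang_pos t
  have hsb0 : 0 < sb := sin_ang_pos t
  set E := exp (-(t/2)) with hE
  set E' := exp (t/2) with hE'
  have hEE' : E * E' = 1 := by rw [hE, hE', ← Real.exp_add]; simp
  have htan : sb = cb * E := by
    have h : tan b = E := by rw [hbdef, ang, hE]; exact Real.tan_arctan _
    rw [Real.tan_eq_sin_div_cos] at h
    have h2 := (div_eq_iff hcb0.ne').1 h
    rw [hsb, hcb] at *
    linarith [h2]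
  have hcbe : cb = sb * E' := by
    rw [htan, mul_assoc, hEE']; ring
  have hsinh : t/2 ≤ (E' - E)/2 := by
    have h1 : t/2 ≤ sinh (t/2) := by
      rcases eq_or_lt_of_le ht with h | h
      · simp [← h]
      · exact (Real.self_lt_sinh_iff.2 (by linarith)).le
    rw [Real.sinh_eq] at h1
    rw [hE, hE']
    exact h1
  have hEle1 : E ≤ 1 := by rw [hE, Real.exp_le_one_iff]; linarith
  have hcbsb : sb ≤ cb := by nlinarith
  have pyth : sb^2 + cb^2 = 1 := Real.sin_sq_add_cos_sq b
  have hsum : cb + sb ≤ Real.sqrt 2 := by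
    nlinarith [Real.sq_sqrt (show (0:ℝ) ≤ 2 by norm_num), Real.sqrt_nonneg 2,
      sq_nonneg (cb + sb - Real.sqrt 2), sq_nonneg (cb - sb)]
  have hangneg : ang (-t) = π/2 - b := ang_neg t
  have harg : (ang (-t) - ang t)/2 = π/4 - b := by rw [hangneg]; ring
  have hsin : sin (π/4 - b) = (Real.sqrt 2/2) * (cb - sb) := by
    rw [Real.sin_sub, Real.sin_pi_div_four, Real.cos_pi_div_four]; ring
  have hrrt : rr t = cb * sb := by rw [rr]
  rw [phi, harg, hsin, hrrt]
  have h1 : t * (cb*sb) ≤ (E' - E) * (cb*sb) := by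
    have h0 : t ≤ E' - E := by linarith
    exact mul_le_mul_of_nonneg_right h0 (by positivity)
  have h2 : (E' - E)*(cb*sb) = cb^2 - sb^2 := by
    have e1 : E' * sb = cb := by rw [hcbe]; ring
    have e2 : E * cb = sb := by rw [htan]; ring
    linear_combination cb * e1 - sb * e2
  have h3 : cb^2 - sb^2 ≤ Real.sqrt 2*(cb - sb) := by nlinarith
  have main : t * (cb*sb) ≤ Real.sqrt 2 * (cb - sb) := by linarith
  nlinarith [main]

lemma keyL {t : ℝ} (ht : 0 ≤ t) {σ : ℝ} (h1 : -t ≤ σ) (h2 : σ ≤ t) :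
    rr t * (t - σ) ≤ 4 * sin ((ang σ - ang t)/2) := by
  have hphi : 0 ≤ phi t σ := by
    rcases le_or_gt 0 σ with h0 | h0
    · exact step1 h0 h2
    · by_cases hD : rr t ≤ rr σ * cos ((ang σ - ang t)/2)
      · have hmv := le_of_deriv_nonpos (hasDerivAt_phi t) h0.le
          (fun x hx1 hx2 => by
            have := D_mono ht h1 hx1.le hx2.le
            linarith)
        have h00 : 0 ≤ phi t 0 := step1 le_rfl ht
        linarith
      · push_neg at hD
        have hmv := ge_of_deriv_nonneg (hasDerivAt_phi t) h1
          (fun x hx1 hx2 => by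
            have := D_mono ht hx1.le hx2.le h0.le
            linarith)
        have hE := stepE ht
        linarith
  rw [phi] at hphi
  linarith

lemma continuous_ang : Continuous ang := by
  unfold ang
  exact Real.continuous_arctan.comp (Real.continuous_exp.comp (by fun_prop))

lemma continuous_rr : Continuous rr := by
  unfold rr
  exact (Real.continuous_cos.comp continuous_ang).mul (Real.continuous_sin.comp continuous_ang)

lemma sin_half_nonneg {s t : ℝ} (hst : s ≤ t) : 0 ≤ sin ((ang s - ang t)/2) := by
  have h1 := ang_antitone hst
  have h2 := ang_lt s
  have h3 := ang_pos t
  have hpi := Real.pi_pos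
  apply Real.sin_nonneg_of_nonneg_of_le_pi <;> [linarith; linarith]

lemma lower_le {s t : ℝ} (hst : s ≤ t) :
    ∃ e ∈ Set.uIcc s t, rr e^2*(t-s)^2/8 ≤ 2*sin ((ang s - ang t)/2)^2 := by
  have hs0 : 0 ≤ sin ((ang s - ang t)/2) := sin_half_nonneg hst
  rcases le_or_gt (-t) s with hcase | hcase
  · refine ⟨t, Set.right_mem_uIcc, ?_⟩
    have hk := keyL (by linarith : (0:ℝ) ≤ t) hcase hst
    have h0 : 0 ≤ rr t * (t - s) := mul_nonneg (rr_pos t).le (by linarith)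
    nlinarith [hk]
  · refine ⟨s, Set.left_mem_uIcc, ?_⟩
    have hts : (0:ℝ) ≤ -s := by linarith
    have hk := keyL hts (by linarith : -(-s) ≤ -t) (by linarith : -t ≤ -s)
    rw [rr_even] at hk
    have harg : (ang (-t) - ang (-s))/2 = (ang s - ang t)/2 := by
      rw [ang_neg, ang_neg]; ring
    rw [harg] at hk
    have harg2 : -s - -t = t - s := by ring
    rw [harg2] at hk
    have h0 : 0 ≤ rr s * (t - s) := mul_nonneg (rr_pos s).le (by linarith)
    nlinarith [hk]

lemma Hsymm (s t : ℝ) : 2*sin ((ang t - ang s)/2)^2 = 2*sin ((ang s - ang t)/2)^2 := by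
  have h : (ang t - ang s)/2 = -((ang s - ang t)/2) := by ring
  rw [h, Real.sin_neg]; ring

lemma lower_endpoint (s t : ℝ) :
    ∃ e ∈ Set.uIcc s t, rr e^2*(t-s)^2/8 ≤ 2*sin ((ang s - ang t)/2)^2 := by
  rcases le_total s t with h | h
  · exact lower_le h
  · obtain ⟨e, he, hle⟩ := lower_le h
    refine ⟨e, Set.uIcc_comm s t ▸ he, ?_⟩
    rw [← Hsymm]
    have : (t-s)^2 = (s-t)^2 := by ring
    rw [this]
    exact hle

lemma mvt_aux {a b : ℝ} (hab : a < b) :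
    ∃ c ∈ Set.Ioo a b, (ang a - ang b)^2 = rr c^2*(b-a)^2/4 := by
  obtain ⟨c, hc, hceq⟩ := exists_hasDerivAt_eq_slope ang (fun c => -(rr c)/2) hab
    (fun x _ => (hasDerivAt_ang x).continuousAt.continuousWithinAt)
    (fun x _ => hasDerivAt_ang x)
  refine ⟨c, hc, ?_⟩
  have hba : b - a ≠ 0 := by linarith
  have : ang b - ang a = -(rr c)/2 * (b - a) := by
    rw [hceq]; field_simp
  have h2 : ang a - ang b = rr c/2 * (b-a) := by linarith [this]
  rw [h2]; ring

lemma upper_mvt (s t : ℝ) :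
    ∃ c ∈ Set.uIcc s t, 2*sin ((ang s - ang t)/2)^2 ≤ rr c^2*(t-s)^2/8 := by
  rcases eq_or_ne s t with rfl | hne
  · exact ⟨s, Set.left_mem_uIcc, by simp⟩
  have hsq : ∃ c ∈ Set.uIcc s t, (ang s - ang t)^2 = rr c^2*(t-s)^2/4 := by
    rcases lt_or_gt_of_ne hne with h | h
    · obtain ⟨c, hc, hceq⟩ := mvt_aux h
      exact ⟨c, Set.Ioo_subset_Icc_self.trans (Set.Icc_subset_uIcc) hc, hceq⟩
    · obtain ⟨c, hc, hceq⟩ := mvt_aux h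
      refine ⟨c, Set.uIcc_comm s t ▸ (Set.Ioo_subset_Icc_self.trans (Set.Icc_subset_uIcc) hc), ?_⟩
      have e1 : (ang s - ang t)^2 = (ang t - ang s)^2 := by ring
      have e2 : (t-s)^2 = (s-t)^2 := by ring
      rw [e1, e2]; exact hceq
  obtain ⟨c, hc, hceq⟩ := hsq
  refine ⟨c, hc, ?_⟩
  have hs := sin_sq_le_sq ((ang s - ang t)/2)
  nlinarith [hceq, hs]

lemma main1d (s t : ℝ) :
    ∃ c ∈ Set.uIcc s t, 2*sin ((ang s - ang t)/2)^2 = rr c^2*(t-s)^2/8 := by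
  obtain ⟨e, he, hle⟩ := lower_endpoint s t
  obtain ⟨c₁, hc₁, hge⟩ := upper_mvt s t
  have hcont : ContinuousOn (fun c => rr c^2*(t-s)^2/8) (Set.uIcc e c₁) :=
    (((continuous_rr.pow 2).mul continuous_const).div_const 8).continuousOn
  have hmem : 2*sin ((ang s - ang t)/2)^2 ∈
      Set.uIcc ((fun c => rr c^2*(t-s)^2/8) e) ((fun c => rr c^2*(t-s)^2/8) c₁) := by
    rw [Set.mem_uIcc]
    exact Or.inl ⟨hle, hge⟩
  obtain ⟨c, hc, hceq⟩ := intermediate_value_uIcc hcont hmem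
  exact ⟨c, Set.uIcc_subset_uIcc he hc₁ hc, hceq.symm⟩

lemma lik_zero (s : ℝ) : logisticLik s 0 = logisticFn (-s) := by simp [logisticLik]

lemma lik_one (s : ℝ) : logisticLik s 1 = logisticFn s := by simp [logisticLik]

lemma hellinger_sum (s t : ℝ) :
    (1/2 : ℝ) * ∑ x ∈ Finset.range 2,
      (Real.sqrt (logisticLik s x) - Real.sqrt (logisticLik t x))^2
      = 2 * sin ((ang s - ang t)/2)^2 := by
  rw [Finset.sum_range_succ, Finset.sum_range_one, lik_zero, lik_zero, lik_one, lik_one,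
    sqrt_logistic', sqrt_logistic', sqrt_logistic, sqrt_logistic]
  have h1 := Real.sin_sq_add_cos_sq (ang s)
  have h2 := Real.sin_sq_add_cos_sq (ang t)
  have h3 : (2:ℝ) * ((ang s - ang t)/2) = ang s - ang t := by ring
  rw [Real.sin_sq_eq_half_sub, h3, Real.cos_sub]
  linear_combination h1/2 + h2/2

end LHEC

/-- Hellinger–Euclidean comparison for logistic regression: the squared Hellinger
distance equals `(1/8) Φ(φᵀw) Φ(−φᵀw) ((θ−θ*)ᵀw)²` for some `φ` on the segment
between `θ*` and `θ`; consequently, on a ball `‖θ − θ*‖₂ ≤ R` (with `wᵀw > 0`,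
`‖w‖_∞ ≤ 1`) one has `h(θ*,θ) ≥ C |(θ−θ*)ᵀw|` for some `C > 0`. -/
theorem logistic_hellinger_euclidean_comparison {d : ℕ}
    (θs w : Fin d → ℝ)
    (hw : 0 < dotProd w w) (hwinf : ∀ i, |w i| ≤ 1)
    (R : ℝ) (hR : 0 < R) :
    (∀ θ : Fin d → ℝ, ∃ a ∈ Set.Icc (0 : ℝ) 1,
      logisticSqHellinger θs θ w =
        1 / 8 * logisticFn (dotProd (fun i => θs i + a * (θ i - θs i)) w) *
          logisticFn (-(dotProd (fun i => θs i + a * (θ i - θs i)) w)) *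
          (dotProd (fun i => θ i - θs i) w) ^ 2) ∧
    ∃ C > (0 : ℝ), ∀ θ : Fin d → ℝ, Real.sqrt (∑ i, (θ i - θs i) ^ 2) ≤ R →
      C * |dotProd (fun i => θ i - θs i) w| ≤ Real.sqrt (logisticSqHellinger θs θ w) := by
  open LHEC Real in
  have hdot_sub : ∀ θ : Fin d → ℝ,
      dotProd (fun i => θ i - θs i) w = dotProd θ w - dotProd θs w := by
    intro θ
    simp only [dotProd]
    rw [← Finset.sum_sub_distrib]
    exact Finset.sum_congr rfl (fun i _ => by ring)
  have hdot_aff : ∀ (θ : Fin d → ℝ) (a : ℝ),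
      dotProd (fun i => θs i + a * (θ i - θs i)) w
        = dotProd θs w + a * (dotProd θ w - dotProd θs w) := by
    intro θ a
    simp only [dotProd]
    have h : ∀ i ∈ Finset.univ, (θs i + a * (θ i - θs i)) * w i
        = θs i * w i + a * (θ i * w i - θs i * w i) := fun i _ => by ring
    rw [Finset.sum_congr rfl h, Finset.sum_add_distrib, ← Finset.mul_sum,
      Finset.sum_sub_distrib]
  have hHell : ∀ θ : Fin d → ℝ, logisticSqHellinger θs θ w
      = 2 * Real.sin ((ang (dotProd θs w) - ang (dotProd θ w))/2)^2 := by
    intro θ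
    simp only [logisticSqHellinger]
    exact hellinger_sum _ _
  constructor
  · intro θ
    set s := dotProd θs w with hs
    set t := dotProd θ w with ht
    obtain ⟨c, hc, hceq⟩ := main1d s t
    rcases eq_or_ne t s with hts | hts
    · refine ⟨0, ⟨le_rfl, zero_le_one⟩, ?_⟩
      rw [hHell θ, hdot_sub θ, hdot_aff θ 0, ← ht, hts]
      simp
    · have hne : t - s ≠ 0 := sub_ne_zero.2 hts
      have hca : s + ((c - s)/(t - s)) * (t - s) = c := by field_simp; ring
      have hrw : (c - s)/(t - s) = (s - c)/(s - t) := by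
        rw [div_eq_div_iff hne (by intro h; exact hne (by linarith))]
        ring
      rw [Set.mem_uIcc] at hc
      have ha01 : 0 ≤ (c - s)/(t - s) ∧ (c - s)/(t - s) ≤ 1 := by
        rcases hc with ⟨h1, h2⟩ | ⟨h1, h2⟩
        · have hpos : 0 < t - s := by
            rcases eq_or_lt_of_le (h1.trans h2) with h | h
            · exact absurd h.symm hts
            · linarith
          exact ⟨div_nonneg (by linarith) hpos.le, by rw [div_le_one hpos]; linarith⟩
        · have hpos : 0 < s - t := by
            rcases eq_or_lt_of_le (h1.trans h2) with h | h
            · exact absurd h hts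
            · linarith
          rw [hrw]
          exact ⟨div_nonneg (by linarith) hpos.le, by rw [div_le_one hpos]; linarith⟩
      refine ⟨(c - s)/(t - s), ⟨ha01.1, ha01.2⟩, ?_⟩
      rw [hHell θ, hdot_sub θ, hdot_aff θ, ← ht, hca, hceq, rr_sq]
      ring
  · set s := dotProd θs w with hs
    set M := (d : ℝ) * R with hM
    refine ⟨Real.sqrt (logisticFn (s - M) * logisticFn (-(s + M)) / 8),
      Real.sqrt_pos.2 (div_pos (mul_pos (logistic_pos _) (logistic_pos _)) (by norm_num)), ?_⟩
    intro θ hball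
    set t := dotProd θ w with ht
    have hδ : |t - s| ≤ M := by
      rw [ht, ← hdot_sub θ]
      simp only [dotProd]
      calc |∑ i, (θ i - θs i) * w i| ≤ ∑ i, |(θ i - θs i) * w i| :=
            Finset.abs_sum_le_sum_abs _ _
        _ ≤ ∑ _i : Fin d, R := by
            apply Finset.sum_le_sum
            intro i _
            rw [abs_mul]
            have h1 : |θ i - θs i| ≤ R := by
              have hsq : (θ i - θs i)^2 ≤ ∑ j, (θ j - θs j)^2 :=
                Finset.single_le_sum (f := fun j => (θ j - θs j)^2)
                  (fun j _ => sq_nonneg _) (Finset.mem_univ i)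
              rw [← Real.sqrt_sq_eq_abs]
              exact le_trans (Real.sqrt_le_sqrt hsq) hball
            calc |θ i - θs i| * |w i| ≤ R * 1 :=
                  mul_le_mul h1 (hwinf i) (abs_nonneg _) hR.le
              _ = R := mul_one R
        _ = M := by
            rw [Finset.sum_const, Finset.card_univ, Fintype.card_fin, nsmul_eq_mul, hM]
    obtain ⟨e, he, hle⟩ := main1d s t
    have habs := abs_le.1 hδ
    have heI : s - M ≤ e ∧ e ≤ s + M := by
      rw [Set.mem_uIcc] at he
      rcases he with ⟨h1, h2⟩ | ⟨h1, h2⟩ <;> exact ⟨by linarith, by linarith⟩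
    have hKe : logisticFn (s - M) * logisticFn (-(s + M)) ≤ rr e^2 := by
      rw [rr_sq]
      exact mul_le_mul (logistic_mono heI.1) (logistic_mono (by linarith [heI.2]))
        (logistic_pos _).le (logistic_pos _).le
    have hstep : logisticFn (s - M) * logisticFn (-(s + M)) / 8 * (t - s)^2
        ≤ 2 * Real.sin ((ang s - ang t)/2)^2 := by
      rw [hle]
      nlinarith [hKe, sq_nonneg (t - s)]
    rw [hHell θ, hdot_sub θ, ← ht]
    calc Real.sqrt (logisticFn (s - M) * logisticFn (-(s + M)) / 8) * |t - s|
        = Real.sqrt (logisticFn (s - M) * logisticFn (-(s + M)) / 8 * (t - s)^2) := by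
          rw [Real.sqrt_mul (div_nonneg (mul_nonneg (logistic_pos _).le
            (logistic_pos _).le) (by norm_num)), Real.sqrt_sq_eq_abs]
      _ ≤ Real.sqrt (2 * Real.sin ((ang s - ang t)/2)^2) := Real.sqrt_le_sqrt hstep
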